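/- For every real number c ≥ 0, the iterates of the parallel Grover operator applied to the normalized source state converge as follows: lim_{N→∞} PG₂(N)^{⌊c·√N⌋} · (0,0,0,1)ᵀ = (sin²(√2·c), √2·sin(√2·c)·cos(√2·c), 0, cos²(√2·c))ᵀ, the limit taken entrywise in ℝ⁴. (In particular, in the basis ordering (e₁e₂, e₁N₂, N₁e₂, N₁N₂), after ⌊c√N⌋ iterations the amplitude of the sink state e₁e₂ tends to sin²(√2 c), that of e₁N₂ to √2 sin(√2 c)cos(√2 c), that of N₁e₂ to 0, and that of the source state N₁N₂ to cos²(√2 c).) -/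

import Mathlib

open Matrix Filter Real
open scoped Kronecker

/-- The 2×2 Grover matrix. -/
noncomputable def GroverM (N : ℕ) : Matrix (Fin 2) (Fin 2) ℝ :=
  !![1 - 2 / (N : ℝ), 2 * Real.sqrt ((N : ℝ) - 1) / (N : ℝ);
     -(2 * Real.sqrt ((N : ℝ) - 1) / (N : ℝ)), 1 - 2 / (N : ℝ)]

/-- The 2×2 inversion-about-the-mean matrix. -/
noncomputable def IAMM (N : ℕ) : Matrix (Fin 2) (Fin 2) ℝ :=
  !![-(1 - 2 / (N : ℝ)), 2 * Real.sqrt ((N : ℝ) - 1) / (N : ℝ);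
     2 * Real.sqrt ((N : ℝ) - 1) / (N : ℝ), 1 - 2 / (N : ℝ)]

/-- The parallel Grover operator for `k = 2`, in the Kronecker-product basis
ordering `(e₁e₂, e₁N₂, N₁e₂, N₁N₂)`. -/
noncomputable def PG2 (N : ℕ) : Matrix (Fin 2 × Fin 2) (Fin 2 × Fin 2) ℝ :=
  (GroverM N ⊗ₖ (1 : Matrix (Fin 2) (Fin 2) ℝ)) *
    ((!![1, 0; 0, 0] : Matrix (Fin 2) (Fin 2) ℝ) ⊗ₖ GroverM N +
      (!![0, 0; 0, 1] : Matrix (Fin 2) (Fin 2) ℝ) ⊗ₖ IAMM N)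

noncomputable def av (N : ℕ) : ℝ := 1 - 2 / (N : ℝ)
noncomputable def bv (N : ℕ) : ℝ := 2 * Real.sqrt ((N : ℝ) - 1) / (N : ℝ)
noncomputable def rv (N : ℕ) : ℝ := Real.sqrt (1 + av N ^ 2)
noncomputable def psv (N : ℕ) : ℝ := Real.arccos (av N ^ 2)

lemma bv_nonneg (N : ℕ) : 0 ≤ bv N := by unfold bv; positivity

lemma hb2 (N : ℕ) (hN : 2 ≤ N) : bv N ^ 2 = 1 - av N ^ 2 := by
  have h1 : (1:ℝ) ≤ (N:ℝ) := by exact_mod_cast Nat.one_le_of_lt hN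
  have h0 : (N:ℝ) ≠ 0 := by positivity
  have hs : Real.sqrt ((N:ℝ) - 1) ^ 2 = (N:ℝ) - 1 := Real.sq_sqrt (by linarith)
  unfold bv av
  rw [div_pow, mul_pow, hs]
  field_simp
  ring

lemma hr2 (N : ℕ) : rv N ^ 2 = 1 + av N ^ 2 := Real.sq_sqrt (by positivity)

lemma rv_pos (N : ℕ) : 0 < rv N := Real.sqrt_pos.2 (by positivity)

lemma ha2 (N : ℕ) (hN : 2 ≤ N) : av N ^ 2 ≤ 1 := by
  nlinarith [hb2 N hN, sq_nonneg (bv N)]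

lemma hcos (N : ℕ) (hN : 2 ≤ N) : Real.cos (psv N) = av N ^ 2 :=
  Real.cos_arccos (by nlinarith [sq_nonneg (av N)]) (ha2 N hN)

lemma hsin (N : ℕ) (hN : 2 ≤ N) : Real.sin (psv N) = bv N * rv N := by
  rw [psv, Real.sin_arccos]
  have : 1 - (av N ^ 2) ^ 2 = (bv N * rv N) ^ 2 := by
    have := hb2 N hN; have := hr2 N; nlinarith
  rw [this, Real.sqrt_sq (mul_nonneg (bv_nonneg N) (rv_pos N).le)]

lemma GroverM_eq (N : ℕ) : GroverM N = !![av N, bv N; -(bv N), av N] := by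
  simp [GroverM, av, bv]

lemma IAMM_eq (N : ℕ) : IAMM N = !![-(av N), bv N; bv N, av N] := by
  simp [IAMM, av, bv]

lemma PG2_apply (N : ℕ) (i k j l : Fin 2) :
    PG2 N (i, k) (j, l) =
      GroverM N i j * (if j = 0 then GroverM N k l else IAMM N k l) := by
  fin_cases j <;>
    simp [PG2, Matrix.mul_apply, Fintype.sum_prod_type, Matrix.kroneckerMap_apply,
      Matrix.one_apply, Fin.sum_univ_two, Matrix.add_apply]

noncomputable def Vv (N n : ℕ) : Fin 2 × Fin 2 → ℝ := fun p =>
  (if p = (0, 0) then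
      rv N ^ 2 - ((-1 : ℝ) ^ n * bv N ^ 2 + 2 * av N ^ 2 * Real.cos (n * psv N))
    else if p = (0, 1) then 2 * av N * Real.sin (n * psv N) * rv N
    else if p = (1, 0) then 2 * av N * bv N * (Real.cos (n * psv N) - (-1 : ℝ) ^ n)
    else rv N ^ 2 + ((-1 : ℝ) ^ n * bv N ^ 2 + 2 * av N ^ 2 * Real.cos (n * psv N)))
  / (2 * rv N ^ 2)

lemma key (N : ℕ) (hN : 2 ≤ N) (n : ℕ) :
    (PG2 N ^ n).mulVec (fun p : Fin 2 × Fin 2 => if p = (1, 1) then 1 else 0) = Vv N n := by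
  induction n with
  | zero =>
    rw [pow_zero, Matrix.one_mulVec]
    funext p
    obtain ⟨i, k⟩ := p
    have hr := hr2 N
    have hb := hb2 N hN
    have hrne : rv N ≠ 0 := (rv_pos N).ne'
    fin_cases i <;> fin_cases k <;>
      norm_num [Vv, Prod.ext_iff] <;>
      (field_simp; linarith [hr, hb])
  | succ n ih =>
    rw [pow_succ', ← Matrix.mulVec_mulVec, ih]
    funext p
    obtain ⟨i, k⟩ := p
    have hr := hr2 N
    have hb := hb2 N hN
    have hrne : rv N ≠ 0 := (rv_pos N).ne'
    have hC : Real.cos (((n : ℝ) + 1) * psv N) =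
        Real.cos (n * psv N) * av N ^ 2 - Real.sin (n * psv N) * (bv N * rv N) := by
      rw [add_mul, one_mul, Real.cos_add, hcos N hN, hsin N hN]
    have hS : Real.sin (((n : ℝ) + 1) * psv N) =
        Real.sin (n * psv N) * av N ^ 2 + Real.cos (n * psv N) * (bv N * rv N) := by
      rw [add_mul, one_mul, Real.sin_add, hcos N hN, hsin N hN]
    fin_cases i <;> fin_cases k
    · simp only [Matrix.mulVec, dotProduct, Fintype.sum_prod_type,
        Fin.sum_univ_two, PG2_apply, GroverM_eq, IAMM_eq, Vv]
      norm_num [Prod.ext_iff]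
      push_cast
      try simp only [hC, hS]
      linear_combination ((rv N ^ 2 + bv N ^ 2 * (-1:ℝ) ^ n) * hb) / (2 * rv N ^ 2)
    · simp only [Matrix.mulVec, dotProduct, Fintype.sum_prod_type,
        Fin.sum_univ_two, PG2_apply, GroverM_eq, IAMM_eq, Vv]
      norm_num [Prod.ext_iff]
      push_cast
      try simp only [hC, hS]
      linear_combination ((2 * av N * bv N * Real.cos (n * psv N)) * (hb - hr)) / (2 * rv N ^ 2)
    · simp only [Matrix.mulVec, dotProduct, Fintype.sum_prod_type,
        Fin.sum_univ_two, PG2_apply, GroverM_eq, IAMM_eq, Vv]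
      norm_num [Prod.ext_iff]
      push_cast
      try simp only [hC, hS]
      linear_combination ((2 * av N * bv N * (-1:ℝ) ^ n) * hb) / (2 * rv N ^ 2)
    · simp only [Matrix.mulVec, dotProduct, Fintype.sum_prod_type,
        Fin.sum_univ_two, PG2_apply, GroverM_eq, IAMM_eq, Vv]
      norm_num [Prod.ext_iff]
      push_cast
      try simp only [hC, hS]
      linear_combination ((rv N ^ 2 - bv N ^ 2 * (-1:ℝ) ^ n) * hb) / (2 * rv N ^ 2)

section Limits

open Filter

lemma hA_lim : Tendsto (fun N : ℕ => av N) atTop (nhds 1) := by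
  have h : Tendsto (fun N : ℕ => (2:ℝ)/N) atTop (nhds 0) :=
    tendsto_const_div_atTop_nhds_zero_nat 2
  have h2 := (tendsto_const_nhds (x := (1:ℝ)) (f := (atTop : Filter ℕ))).sub h
  simpa [av] using h2

lemma hB_lim : Tendsto (fun N : ℕ => bv N) atTop (nhds 0) := by
  have h1 : Tendsto (fun N : ℕ => Real.sqrt (1 - av N ^ 2)) atTop (nhds 0) := by
    have h := (tendsto_const_nhds (x := (1:ℝ)) (f := (atTop : Filter ℕ))).sub (hA_lim.pow 2)
    have h2 := h.sqrt
    norm_num at h2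
    exact h2
  refine Tendsto.congr' ?_ h1
  filter_upwards [eventually_ge_atTop 2] with N hN
  rw [← hb2 N hN, Real.sqrt_sq (bv_nonneg N)]

lemma hR_lim : Tendsto (fun N : ℕ => rv N) atTop (nhds (Real.sqrt 2)) := by
  have h := ((tendsto_const_nhds (x := (1:ℝ)) (f := (atTop : Filter ℕ))).add (hA_lim.pow 2)).sqrt
  norm_num at h
  exact h

lemma hr2_lim : Tendsto (fun N : ℕ => rv N ^ 2) atTop (nhds 2) := by
  have h := hR_lim.pow 2
  rwa [Real.sq_sqrt (by norm_num : (0:ℝ) ≤ 2)] at h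

lemma hpsi0 : Tendsto (fun N : ℕ => psv N) atTop (nhds 0) := by
  have h2 : Tendsto (fun N : ℕ => av N ^ 2) atTop (nhds 1) := by simpa using hA_lim.pow 2
  have h := (Real.continuous_arccos.tendsto 1).comp h2
  simpa [psv, Real.arccos_one, Function.comp_def] using h

lemma av_mem (N : ℕ) (hN : 2 ≤ N) : 0 ≤ av N ∧ av N < 1 := by
  have h2 : (2:ℝ) ≤ (N:ℝ) := by exact_mod_cast hN
  have hNpos : (0:ℝ) < N := by linarith
  unfold av
  constructor
  · have : 2/(N:ℝ) ≤ 1 := by rw [div_le_one hNpos]; linarith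
    linarith
  · have : 0 < 2/(N:ℝ) := by positivity
    linarith

lemma av_sq_lt (N : ℕ) (hN : 2 ≤ N) : av N ^ 2 < 1 := by
  obtain ⟨h0, h1⟩ := av_mem N hN
  nlinarith

lemma psv_pos (N : ℕ) (hN : 2 ≤ N) : 0 < psv N :=
  Real.arccos_pos.2 (av_sq_lt N hN)

lemma bv_pos (N : ℕ) (hN : 2 ≤ N) : 0 < bv N := by
  have h2 : (2:ℝ) ≤ (N:ℝ) := by exact_mod_cast hN
  unfold bv
  exact div_pos (mul_pos two_pos (Real.sqrt_pos.2 (by linarith))) (by linarith)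

lemma sin_psv_pos (N : ℕ) (hN : 2 ≤ N) : 0 < Real.sin (psv N) := by
  rw [hsin N hN]; exact mul_pos (bv_pos N hN) (rv_pos N)

lemma hratio : Tendsto (fun N : ℕ => psv N / Real.sin (psv N)) atTop (nhds 1) := by
  have hslope : Tendsto (fun x : ℝ => Real.sin x / x) (nhdsWithin 0 {x | x ≠ 0}) (nhds 1) := by
    have h := Real.hasDerivAt_sin 0
    rw [hasDerivAt_iff_tendsto_slope] at h
    simp only [Real.cos_zero] at h
    convert h using 2 with x
    simp [slope_fun_def, Real.sin_zero, div_eq_inv_mul]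
    ext x; simp
  have hinv : Tendsto (fun x : ℝ => x / Real.sin x) (nhdsWithin 0 {x | x ≠ 0}) (nhds 1) := by
    have h := hslope.inv₀ one_ne_zero
    simpa [inv_div] using h
  have hcomp : Tendsto (fun N : ℕ => psv N) atTop (nhdsWithin 0 {x | x ≠ 0}) := by
    rw [tendsto_nhdsWithin_iff]
    exact ⟨hpsi0, eventually_atTop.2 ⟨2, fun N hN => (psv_pos N hN).ne'⟩⟩
  exact hinv.comp hcomp

lemma sqrt_mul_bv (N : ℕ) (hN : 2 ≤ N) :
    Real.sqrt N * bv N = 2 * Real.sqrt (1 - 1/(N:ℝ)) := by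
  have h2 : (2:ℝ) ≤ (N:ℝ) := by exact_mod_cast hN
  have hNpos : (0:ℝ) < N := by linarith
  have h1 : (1:ℝ) - 1/(N:ℝ) = ((N:ℝ)-1)/N := by field_simp
  rw [h1, Real.sqrt_div (by linarith : (0:ℝ) ≤ (N:ℝ)-1), bv]
  have hss : Real.sqrt N * Real.sqrt N = (N:ℝ) := Real.mul_self_sqrt hNpos.le
  have hsne : Real.sqrt N ≠ 0 := by positivity
  field_simp
  linear_combination (Real.sqrt ((N:ℝ)-1)) * hss

lemma hsqsin : Tendsto (fun N : ℕ => Real.sqrt N * Real.sin (psv N)) atTop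
    (nhds (2 * Real.sqrt 2)) := by
  have h1n : Tendsto (fun N : ℕ => 1/(N:ℝ)) atTop (nhds 0) :=
    tendsto_one_div_atTop_nhds_zero_nat
  have hbase : Tendsto (fun N : ℕ => 2 * Real.sqrt (1 - 1/(N:ℝ)) * rv N) atTop
      (nhds (2 * Real.sqrt 2)) := by
    have h := ((tendsto_const_nhds (x := (2:ℝ)) (f := (atTop : Filter ℕ))).mul
      ((tendsto_const_nhds (x := (1:ℝ)) (f := (atTop : Filter ℕ))).sub h1n).sqrt).mul hR_lim
    norm_num at h
    simpa [one_div] using h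
  refine Tendsto.congr' ?_ hbase
  filter_upwards [eventually_ge_atTop 2] with N hN
  rw [hsin N hN, ← mul_assoc, sqrt_mul_bv N hN]

lemma hNpsi : Tendsto (fun N : ℕ => Real.sqrt N * psv N) atTop (nhds (2 * Real.sqrt 2)) := by
  have h := hratio.mul hsqsin
  norm_num at h
  refine Tendsto.congr' ?_ h
  filter_upwards [eventually_ge_atTop 2] with N hN
  have hs : Real.sin (psv N) ≠ 0 := (sin_psv_pos N hN).ne'
  field_simp

lemma inv_sqrt_lim : Tendsto (fun N : ℕ => 1 / Real.sqrt N) atTop (nhds 0) := by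
  have h := (tendsto_one_div_atTop_nhds_zero_nat).sqrt
  norm_num at h
  refine Tendsto.congr (fun N => ?_) h
  rw [one_div]

lemma hfloor (c : ℝ) (hc : 0 ≤ c) :
    Tendsto (fun N : ℕ => (⌊c * Real.sqrt N⌋₊ : ℝ) / Real.sqrt N) atTop (nhds c) := by
  have hlow : Tendsto (fun N : ℕ => c - 1 / Real.sqrt N) atTop (nhds c) := by
    have h := (tendsto_const_nhds (x := c) (f := (atTop : Filter ℕ))).sub inv_sqrt_lim
    simpa using h
  refine tendsto_of_tendsto_of_tendsto_of_le_of_le' hlow tendsto_const_nhds ?_ ?_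
  · filter_upwards [eventually_ge_atTop 1] with N hN
    have hNpos : (0:ℝ) < N := by exact_mod_cast hN
    have hs : 0 < Real.sqrt N := Real.sqrt_pos.2 hNpos
    have heq : c - 1 / Real.sqrt N = (c * Real.sqrt N - 1) / Real.sqrt N := by
      field_simp
    rw [heq]
    gcongr
    exact (Nat.sub_one_lt_floor _).le
  · filter_upwards [eventually_ge_atTop 1] with N hN
    have hNpos : (0:ℝ) < N := by exact_mod_cast hN
    have hs : 0 < Real.sqrt N := Real.sqrt_pos.2 hNpos
    rw [div_le_iff₀ hs]
    exact (Nat.floor_le (mul_nonneg hc (Real.sqrt_nonneg _))).trans (le_of_eq rfl)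

lemma hfloorT (c : ℝ) (hc : 0 ≤ c) :
    Tendsto (fun N : ℕ => (⌊c * Real.sqrt N⌋₊ : ℝ) * psv N) atTop
      (nhds (2 * Real.sqrt 2 * c)) := by
  have h := (hfloor c hc).mul hNpsi
  have hval : c * (2 * Real.sqrt 2) = 2 * Real.sqrt 2 * c := by ring
  rw [hval] at h
  refine Tendsto.congr' ?_ h
  filter_upwards [eventually_ge_atTop 1] with N hN
  have hNpos : (0:ℝ) < N := by exact_mod_cast hN
  have hs : Real.sqrt N ≠ 0 := by positivity
  field_simp

end Limits

section Final

open Filter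

theorem pg2_tendsto (c : ℝ) (hc : 0 ≤ c) :
    Tendsto
      (fun N : ℕ =>
        (PG2 N ^ ⌊c * Real.sqrt N⌋₊).mulVec
          (fun p : Fin 2 × Fin 2 => if p = (1, 1) then 1 else 0))
      atTop
      (nhds (fun p : Fin 2 × Fin 2 =>
        if p = (0, 0) then Real.sin (Real.sqrt 2 * c) ^ 2
        else if p = (0, 1) then
          Real.sqrt 2 * Real.sin (Real.sqrt 2 * c) * Real.cos (Real.sqrt 2 * c)
        else if p = (1, 0) then 0
        else Real.cos (Real.sqrt 2 * c) ^ 2)) := by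
  have hT := hfloorT c hc
  have hcosT : Tendsto (fun N : ℕ => Real.cos ((⌊c * Real.sqrt N⌋₊ : ℝ) * psv N)) atTop
      (nhds (Real.cos (2 * Real.sqrt 2 * c))) := by
    simpa [Function.comp_def] using (Real.continuous_cos.tendsto _).comp hT
  have hsinT : Tendsto (fun N : ℕ => Real.sin ((⌊c * Real.sqrt N⌋₊ : ℝ) * psv N)) atTop
      (nhds (Real.sin (2 * Real.sqrt 2 * c))) := by
    simpa [Function.comp_def] using (Real.continuous_sin.tendsto _).comp hT
  have hBsq : Tendsto (fun N : ℕ => bv N ^ 2) atTop (nhds 0) := by simpa using hB_lim.pow 2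
  have hEps : Tendsto (fun N : ℕ => (-1:ℝ) ^ ⌊c * Real.sqrt N⌋₊ * bv N ^ 2) atTop (nhds 0) := by
    refine squeeze_zero_norm (fun N => ?_) hBsq
    rw [norm_mul, norm_pow, norm_neg, norm_one, one_pow, one_mul, Real.norm_eq_abs,
      abs_of_nonneg (sq_nonneg _)]
  have hEb : Tendsto (fun N : ℕ => bv N * (-1:ℝ) ^ ⌊c * Real.sqrt N⌋₊) atTop (nhds 0) := by
    refine squeeze_zero_norm (fun N => ?_) hB_lim
    rw [norm_mul, norm_pow, norm_neg, norm_one, one_pow, mul_one, Real.norm_eq_abs,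
      abs_of_nonneg (bv_nonneg N)]
  have hden : Tendsto (fun N : ℕ => 2 * rv N ^ 2) atTop (nhds (2 * 2)) :=
    (tendsto_const_nhds (x := (2:ℝ)) (f := (atTop : Filter ℕ))).mul hr2_lim
  have hdne : (2:ℝ) * 2 ≠ 0 := by norm_num
  have hssc := Real.sin_sq_add_cos_sq (Real.sqrt 2 * c)
  have harg : 2 * Real.sqrt 2 * c = 2 * (Real.sqrt 2 * c) := by ring
  have hVv : Tendsto (fun N : ℕ => Vv N ⌊c * Real.sqrt N⌋₊) atTop
      (nhds (fun p : Fin 2 × Fin 2 =>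
        if p = (0, 0) then Real.sin (Real.sqrt 2 * c) ^ 2
        else if p = (0, 1) then
          Real.sqrt 2 * Real.sin (Real.sqrt 2 * c) * Real.cos (Real.sqrt 2 * c)
        else if p = (1, 0) then 0
        else Real.cos (Real.sqrt 2 * c) ^ 2)) := by
    rw [tendsto_pi_nhds]
    intro p
    obtain ⟨i, k⟩ := p
    fin_cases i <;> fin_cases k
    · -- (0,0)
      norm_num [Vv, Prod.ext_iff]
      have hnum := hr2_lim.sub (hEps.add
        (((tendsto_const_nhds (x := (2:ℝ)) (f := (atTop : Filter ℕ))).mul (hA_lim.pow 2)).mul hcosT))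
      have h := hnum.div hden hdne
      have hval : Real.sin (Real.sqrt 2 * c) ^ 2 =
          (2 - (0 + 2 * 1 ^ 2 * Real.cos (2 * Real.sqrt 2 * c))) / (2 * 2) := by
        rw [harg, Real.cos_two_mul]
        nlinarith [hssc]
      rw [hval]
      exact h
    · -- (0,1)
      norm_num [Vv, Prod.ext_iff]
      have hnum := (((tendsto_const_nhds (x := (2:ℝ)) (f := (atTop : Filter ℕ))).mul
        hA_lim).mul hsinT).mul hR_lim
      have h := hnum.div hden hdne
      have hval : Real.sqrt 2 * Real.sin (Real.sqrt 2 * c) * Real.cos (Real.sqrt 2 * c) =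
          2 * 1 * Real.sin (2 * Real.sqrt 2 * c) * Real.sqrt 2 / (2 * 2) := by
        rw [harg, Real.sin_two_mul]
        ring
      rw [hval]
      exact h
    · -- (1,0)
      norm_num [Vv, Prod.ext_iff]
      have hnum := (((tendsto_const_nhds (x := (2:ℝ)) (f := (atTop : Filter ℕ))).mul
        hA_lim).mul (hB_lim.mul hcosT)).sub
        (((tendsto_const_nhds (x := (2:ℝ)) (f := (atTop : Filter ℕ))).mul hA_lim).mul hEb)
      have h := hnum.div hden hdne
      have hval : (0:ℝ) =
          (2 * 1 * (0 * Real.cos (2 * Real.sqrt 2 * c)) - 2 * 1 * 0) / (2 * 2) := by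
        norm_num
      rw [show nhds (0:ℝ) = nhds ((2 * 1 * (0 * Real.cos (2 * Real.sqrt 2 * c)) - 2 * 1 * 0)
        / (2 * 2)) by rw [← hval]]
      refine Tendsto.congr (fun N => ?_) h
      simp only [Pi.div_apply]
      ring
    · -- (1,1)
      norm_num [Vv, Prod.ext_iff]
      have hnum := hr2_lim.add (hEps.add
        (((tendsto_const_nhds (x := (2:ℝ)) (f := (atTop : Filter ℕ))).mul (hA_lim.pow 2)).mul hcosT))
      have h := hnum.div hden hdne
      have hval : Real.cos (Real.sqrt 2 * c) ^ 2 =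
          (2 + (0 + 2 * 1 ^ 2 * Real.cos (2 * Real.sqrt 2 * c))) / (2 * 2) := by
        rw [harg, Real.cos_two_mul]
        nlinarith [hssc]
      rw [hval]
      exact h
  refine Tendsto.congr' ?_ hVv
  filter_upwards [eventually_ge_atTop 2] with N hN
  exact (key N hN _).symm

end Final
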